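/- Let B ∈ [0,∞], b ∈ ℝ², y ∈ D², and let W = (W₁,W₂) be the unique solution of the unreflected auxiliary system W₁(t) = b₁ + y₁(t) + ∫₀ᵗ(−φ₀(W₁)(s) + φ_B(W₂)(s))ds and W₂(t) = b₂ + y₂(t) + ∫₀ᵗ(−φ_B(W₂)(s))ds + ψ₀(W₁)(t). Then for every t ≥ 0, setting K = |b| + ‖y‖_t, one has ‖W₁‖_t ≤ 2Ke^{6t} and ‖W₂‖_t ≤ 4Ke^{6t}. -/

import Mathlib

open MeasureTheory Filter Set
open scoped ENNReal

noncomputable section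

/-- `f` is càdlàg on `[0,∞)`: right-continuous at every `t ≥ 0` and possessing
finite left limits at every `t > 0`.  (Values on `(-∞,0)` are irrelevant.) -/
def Cadlag (f : ℝ → ℝ) : Prop :=
  (∀ t : ℝ, 0 ≤ t → ContinuousWithinAt f (Set.Ici t) t) ∧
    (∀ t : ℝ, 0 < t → ∃ L : ℝ, Filter.Tendsto f (nhdsWithin t (Set.Iio t)) (nhds L))

/-- Uniform norm of `x` on `[0,t]`: `‖x‖_t = sup_{0 ≤ s ≤ t} |x(s)|`. -/
def unif (x : ℝ → ℝ) (t : ℝ) : ℝ := ⨆ s : Set.Icc (0:ℝ) t, |x s.1|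

/-- Regulator of the one-sided reflection map with upper barrier `κ ∈ ℝ`:
`ψ_κ(x)(t) = sup_{0 ≤ s ≤ t} (x(s) - κ)⁺`. -/
def psiR (κ : ℝ) (x : ℝ → ℝ) (t : ℝ) : ℝ := ⨆ s : Set.Icc (0:ℝ) t, max (x s.1 - κ) 0

/-- One-sided reflection map with upper barrier `κ ∈ ℝ`: `φ_κ(x) = x - ψ_κ(x)`. -/
def phiR (κ : ℝ) (x : ℝ → ℝ) (t : ℝ) : ℝ := x t - psiR κ x t

/-- Regulator for a barrier `κ ∈ [0,∞]`; for `κ = ∞` it is identically `0`. -/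
def psiE (κ : ℝ≥0∞) (x : ℝ → ℝ) : ℝ → ℝ := if κ = ⊤ then 0 else psiR κ.toReal x

/-- Reflection map for a barrier `κ ∈ [0,∞]`; for `κ = ∞` it is the identity. -/
def phiE (κ : ℝ≥0∞) (x : ℝ → ℝ) : ℝ → ℝ := if κ = ⊤ then x else phiR κ.toReal x

/-- "`∫ 𝟙_S du = 0`": every Stieltjes function agreeing with the
(constant-below-zero extension of) `u` assigns measure zero to `S`. -/
def ZeroStieltjesOn (u : ℝ → ℝ) (S : Set ℝ) : Prop :=
  ∀ sf : StieltjesFunction ℝ, (∀ t : ℝ, sf t = u (max t 0)) → sf.measure S = 0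

/-- `u₁, u₂` is a valid pair of regulator processes for `x₁` (barrier `0` from above)
and `x₂` (upper barrier `B ∈ [0,∞]`): nondecreasing nonnegative elements of `D` with
`∫₀^∞ 𝟙{x₁(t) < 0} du₁(t) = 0` and `∫₀^∞ 𝟙{x₂(t) < B} du₂(t) = 0`. -/
def IsRegulator (B : ℝ≥0∞) (x₁ x₂ u₁ u₂ : ℝ → ℝ) : Prop :=
  Cadlag u₁ ∧ Cadlag u₂ ∧ MonotoneOn u₁ (Set.Ici 0) ∧ MonotoneOn u₂ (Set.Ici 0) ∧
    (∀ t ≥ (0:ℝ), 0 ≤ u₁ t) ∧ (∀ t ≥ (0:ℝ), 0 ≤ u₂ t) ∧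
    ZeroStieltjesOn u₁ {t | 0 ≤ t ∧ x₁ t < 0} ∧
    ZeroStieltjesOn u₂ {t | 0 ≤ t ∧ ENNReal.ofReal (x₂ t) < B}
/-- `(w₁, w₂)` solves the unreflected auxiliary system with data
`(B, b₁, b₂, y₁, y₂)` (equations (20)-(21) of the paper). -/
def IsAuxSolution (B : ℝ≥0∞) (b₁ b₂ : ℝ) (y₁ y₂ w₁ w₂ : ℝ → ℝ) : Prop :=
  Cadlag w₁ ∧ Cadlag w₂ ∧
  (∀ t ≥ (0:ℝ), w₁ t =
      b₁ + y₁ t + ∫ s in (0:ℝ)..t, (-(phiR 0 w₁ s) + phiE B w₂ s)) ∧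
  (∀ t ≥ (0:ℝ), w₂ t =
      b₂ + y₂ t + psiR 0 w₁ t + ∫ s in (0:ℝ)..t, -(phiE B w₂ s)) ∧
  (∀ t ≥ (0:ℝ), 0 ≤ w₂ t)

open intervalIntegral

namespace AuxBound

lemma ball_abs {x v : ℝ} (h : x ∈ Metric.ball v 1) : |x| ≤ |v| + 1 := by
  rw [Metric.mem_ball, Real.dist_eq] at h
  have h2 := abs_sub_abs_le_abs_sub x v
  linarith

/-- càdlàg functions are bounded on `[0,t]`. -/
lemma cadlag_bounded {f : ℝ → ℝ} (hf : Cadlag f) (t : ℝ) :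
    ∃ M : ℝ, ∀ s ∈ Icc (0:ℝ) t, |f s| ≤ M := by
  have key : ∀ s ∈ Icc (0:ℝ) t, ∃ ε > (0:ℝ), ∃ M : ℝ,
      ∀ u ∈ Metric.ball s ε ∩ Icc (0:ℝ) t, |f u| ≤ M := by
    intro s hs
    have hR : ∀ᶠ u in nhdsWithin s (Ici s), f u ∈ Metric.ball (f s) 1 :=
      hf.1 s hs.1 (Metric.ball_mem_nhds _ one_pos)
    rw [Filter.eventually_iff, Metric.mem_nhdsWithin_iff] at hR
    obtain ⟨ε₁, hε₁, hR⟩ := hR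
    rcases eq_or_lt_of_le hs.1 with h0 | h0
    · refine ⟨ε₁, hε₁, |f s| + 1, ?_⟩
      rintro u ⟨hu1, hu2⟩
      have hsu : s ≤ u := h0 ▸ hu2.1
      exact ball_abs (hR ⟨hu1, hsu⟩)
    · obtain ⟨L, hL⟩ := hf.2 s h0
      have hLev : ∀ᶠ u in nhdsWithin s (Iio s), f u ∈ Metric.ball L 1 :=
        hL (Metric.ball_mem_nhds _ one_pos)
      rw [Filter.eventually_iff, Metric.mem_nhdsWithin_iff] at hLev
      obtain ⟨ε₂, hε₂, hLev⟩ := hLev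
      refine ⟨min ε₁ ε₂, lt_min hε₁ hε₂, max (|f s| + 1) (|L| + 1), ?_⟩
      rintro u ⟨hu1, hu2⟩
      rcases le_or_gt s u with h | h
      · exact le_trans (ball_abs (hR ⟨Metric.ball_subset_ball (min_le_left _ _) hu1, h⟩))
          (le_max_left _ _)
      · exact le_trans (ball_abs (hLev ⟨Metric.ball_subset_ball (min_le_right _ _) hu1, h⟩))
          (le_max_right _ _)
  choose! ε hε M hM using key
  have hcover : Icc (0:ℝ) t ⊆ ⋃ s ∈ Icc (0:ℝ) t, Metric.ball s (ε s) := fun u hu =>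
    mem_biUnion hu (Metric.mem_ball_self (hε u hu))
  obtain ⟨b', hb'sub, hb'fin, hb'cov⟩ := isCompact_Icc.elim_finite_subcover_image
    (fun s _ => Metric.isOpen_ball) hcover
  obtain ⟨C, hC⟩ := (hb'fin.image M).bddAbove
  refine ⟨C, fun u hu => ?_⟩
  obtain ⟨s, hsmem, hus⟩ := mem_iUnion₂.1 (hb'cov hu)
  exact (hM s (hb'sub hsmem) u ⟨hus, hu⟩).trans (hC (mem_image_of_mem M hsmem))

lemma unif_nonneg (x : ℝ → ℝ) (r : ℝ) : 0 ≤ unif x r :=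
  Real.iSup_nonneg fun _ => abs_nonneg _

lemma psiR_nonneg (κ : ℝ) (x : ℝ → ℝ) (r : ℝ) : 0 ≤ psiR κ x r :=
  Real.iSup_nonneg fun _ => le_max_right _ _

lemma unif_neg {x : ℝ → ℝ} {r : ℝ} (hr : r < 0) : unif x r = 0 := by
  have : IsEmpty (Icc (0:ℝ) r) := by
    rw [Set.isEmpty_coe_sort, Set.Icc_eq_empty (not_le.2 hr)]
  exact Real.iSup_of_isEmpty _

lemma bddAbove_unif {x : ℝ → ℝ} {M t r : ℝ} (hM : ∀ s ∈ Icc (0:ℝ) t, |x s| ≤ M)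
    (hrt : r ≤ t) : BddAbove (range fun s : Icc (0:ℝ) r => |x s.1|) := by
  refine ⟨M, ?_⟩
  rintro z ⟨s, rfl⟩
  exact hM s.1 ⟨s.2.1, s.2.2.trans hrt⟩

lemma abs_le_unif {x : ℝ → ℝ} {M t r s : ℝ} (hM : ∀ u ∈ Icc (0:ℝ) t, |x u| ≤ M)
    (hrt : r ≤ t) (hs : s ∈ Icc (0:ℝ) r) : |x s| ≤ unif x r :=
  le_ciSup (bddAbove_unif hM hrt) (⟨s, hs⟩ : Icc (0:ℝ) r)

lemma unif_le {x : ℝ → ℝ} {r C : ℝ} (hr : 0 ≤ r) (h : ∀ s ∈ Icc (0:ℝ) r, |x s| ≤ C) :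
    unif x r ≤ C := by
  haveI : Nonempty (Icc (0:ℝ) r) := (Set.nonempty_Icc.2 hr).to_subtype
  exact ciSup_le fun s => h s.1 s.2

lemma unif_mono {x : ℝ → ℝ} {M t : ℝ} (hM : ∀ s ∈ Icc (0:ℝ) t, |x s| ≤ M) {r r' : ℝ}
    (hrr : r ≤ r') (hr't : r' ≤ t) : unif x r ≤ unif x r' := by
  rcases lt_or_ge r 0 with h | h
  · rw [unif_neg h]; exact unif_nonneg _ _
  · exact unif_le h fun s hs => abs_le_unif hM hr't ⟨hs.1, hs.2.trans hrr⟩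

lemma psiR_le_unif {κ : ℝ} {x : ℝ → ℝ} {M t r : ℝ} (hκ : 0 ≤ κ)
    (hM : ∀ u ∈ Icc (0:ℝ) t, |x u| ≤ M) (hr : 0 ≤ r) (hrt : r ≤ t) :
    psiR κ x r ≤ unif x r := by
  haveI : Nonempty (Icc (0:ℝ) r) := (Set.nonempty_Icc.2 hr).to_subtype
  refine ciSup_le fun s => max_le ?_ (unif_nonneg _ _)
  calc x s.1 - κ ≤ x s.1 := by linarith
    _ ≤ |x s.1| := le_abs_self _
    _ ≤ unif x r := abs_le_unif hM hrt s.2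

lemma abs_phiR_le {κ : ℝ} {x : ℝ → ℝ} {M t r : ℝ} (hκ : 0 ≤ κ)
    (hM : ∀ u ∈ Icc (0:ℝ) t, |x u| ≤ M) (hr : 0 ≤ r) (hrt : r ≤ t) :
    |phiR κ x r| ≤ 2 * unif x r := by
  have h1 : |x r| ≤ unif x r := abs_le_unif hM hrt ⟨hr, le_rfl⟩
  have h2 : psiR κ x r ≤ unif x r := psiR_le_unif hκ hM hr hrt
  have h3 : 0 ≤ psiR κ x r := psiR_nonneg κ x r
  have h4 : |x r - psiR κ x r| ≤ |x r| + |psiR κ x r| := abs_sub _ _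
  rw [abs_of_nonneg h3] at h4
  rw [phiR]
  linarith

lemma abs_phiE_le {B : ℝ≥0∞} {x : ℝ → ℝ} {M t r : ℝ}
    (hM : ∀ u ∈ Icc (0:ℝ) t, |x u| ≤ M) (hr : 0 ≤ r) (hrt : r ≤ t) :
    |phiE B x r| ≤ 2 * unif x r := by
  unfold phiE
  split
  · have h1 : |x r| ≤ unif x r := abs_le_unif hM hrt ⟨hr, le_rfl⟩
    have h2 := unif_nonneg x r
    linarith
  · exact abs_phiR_le ENNReal.toReal_nonneg hM hr hrt

lemma int_c_exp {c : ℝ} (hc : c ≠ 0) (s : ℝ) :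
    ∫ u in (0:ℝ)..s, c * Real.exp (c * u) = Real.exp (c * s) - 1 := by
  have h := intervalIntegral.integral_comp_mul_left (a := 0) (b := s)
    (fun x => Real.exp x) hc
  simp only [mul_zero, integral_exp, Real.exp_zero, smul_eq_mul] at h
  rw [intervalIntegral.integral_const_mul, h]
  field_simp

lemma int_pow_term (c Mx : ℝ) (n : ℕ) (s : ℝ) :
    ∫ u in (0:ℝ)..s, c * (Mx * (c * u) ^ n / n.factorial)
      = Mx * (c * s) ^ (n + 1) / (n + 1).factorial := by
  have e : (fun u : ℝ => c * (Mx * (c * u) ^ n / n.factorial))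
      = fun u : ℝ => (c ^ (n + 1) * Mx / n.factorial) * u ^ n := by
    funext u
    rw [mul_pow]
    ring
  rw [e, intervalIntegral.integral_const_mul, integral_pow, Nat.factorial_succ]
  have h2 : ((n : ℝ) + 1) ≠ 0 := by positivity
  have h3 : ((n.factorial : ℝ)) ≠ 0 := by exact_mod_cast Nat.factorial_ne_zero n
  push_cast
  rw [mul_pow]
  field_simp
  ring

lemma gronwall {F : ℝ → ℝ} (hmono : Monotone F) {a c t : ℝ}
    (ha : 0 ≤ a) (hc : 0 ≤ c) (ht : 0 ≤ t)
    (h : ∀ s ∈ Icc (0:ℝ) t, F s ≤ a + ∫ u in (0:ℝ)..s, c * F u) :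
    F t ≤ a * Real.exp (c * t) := by
  rcases eq_or_lt_of_le hc with rfl | hc0
  · have h0 := h t ⟨ht, le_rfl⟩
    simp only [zero_mul, intervalIntegral.integral_zero, add_zero] at h0
    simpa [Real.exp_zero] using h0
  · set Mx := max (F t) 0 with hMx
    have hMx0 : 0 ≤ Mx := le_max_right _ _
    have hFle : ∀ s ∈ Icc (0:ℝ) t, F s ≤ Mx := fun s hs =>
      (hmono hs.2).trans (le_max_left _ _)
    have hInt : ∀ s : ℝ, IntervalIntegrable F volume 0 s := fun s =>
      hmono.intervalIntegrable
    have claim : ∀ n : ℕ, ∀ s ∈ Icc (0:ℝ) t,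
        F s ≤ a * Real.exp (c * s) + Mx * (c * s) ^ n / n.factorial := by
      intro n
      induction n with
      | zero =>
        intro s hs
        have hpos : 0 ≤ a * Real.exp (c * s) := by positivity
        have := hFle s hs
        simp only [pow_zero, Nat.factorial_zero, Nat.cast_one, mul_one, div_one]
        linarith
      | succ n ih =>
        intro s hs
        have hs0 : 0 ≤ s := hs.1
        have hIH : ∀ u ∈ Icc (0:ℝ) s, c * F u
            ≤ c * (a * Real.exp (c * u) + Mx * (c * u) ^ n / n.factorial) := fun u hu =>
          mul_le_mul_of_nonneg_left (ih u ⟨hu.1, hu.2.trans hs.2⟩) hc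
        have hg1 : IntervalIntegrable (fun u => c * F u) volume 0 s := (hInt s).const_mul c
        have hexp : Continuous fun u : ℝ => Real.exp (c * u) :=
          Real.continuous_exp.comp (continuous_const.mul continuous_id)
        have hpow : Continuous fun u : ℝ => Mx * (c * u) ^ n / n.factorial :=
          (continuous_const.mul ((continuous_const.mul continuous_id).pow n)).div_const _
        have hc1 : Continuous (fun u : ℝ => c * Real.exp (c * u)) :=
          continuous_const.mul hexp
        have hc2 : Continuous (fun u : ℝ => c * (Mx * (c * u) ^ n / n.factorial)) :=
          continuous_const.mul hpow
        have hg2 : IntervalIntegrable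
            (fun u : ℝ => c * (a * Real.exp (c * u) + Mx * (c * u) ^ n / n.factorial))
            volume 0 s :=
          (continuous_const.mul ((continuous_const.mul hexp).add hpow)).intervalIntegrable 0 s
        have hmonoInt : (∫ u in (0:ℝ)..s, c * F u)
            ≤ ∫ u in (0:ℝ)..s, c * (a * Real.exp (c * u) + Mx * (c * u) ^ n / n.factorial) :=
          intervalIntegral.integral_mono_on hs0 hg1 hg2 hIH
        have hsplit : (fun u : ℝ => c * (a * Real.exp (c * u) + Mx * (c * u) ^ n / n.factorial))
            = fun u : ℝ => a * (c * Real.exp (c * u)) + c * (Mx * (c * u) ^ n / n.factorial) := by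
          funext u; ring
        have hcomp : (∫ u in (0:ℝ)..s, c * (a * Real.exp (c * u) + Mx * (c * u) ^ n / n.factorial))
            = a * (Real.exp (c * s) - 1) + Mx * (c * s) ^ (n + 1) / (n + 1).factorial := by
          rw [hsplit, intervalIntegral.integral_add
              ((hc1.intervalIntegrable 0 s).const_mul a) (hc2.intervalIntegrable 0 s),
            intervalIntegral.integral_const_mul, int_c_exp hc0.ne' s, int_pow_term]
        have hstep := h s hs
        rw [hcomp] at hmonoInt
        calc F s ≤ a + ∫ u in (0:ℝ)..s, c * F u := hstep
          _ ≤ a + (a * (Real.exp (c * s) - 1) + Mx * (c * s) ^ (n + 1) / (n + 1).factorial) := by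
              linarith
          _ = a * Real.exp (c * s) + Mx * (c * s) ^ (n + 1) / (n + 1).factorial := by ring
    have htail : Tendsto (fun n : ℕ => a * Real.exp (c * t) + Mx * (c * t) ^ n / n.factorial)
        atTop (nhds (a * Real.exp (c * t))) := by
      have h0 : Tendsto (fun n : ℕ => Mx * ((c * t) ^ n / n.factorial)) atTop (nhds (Mx * 0)) :=
        (FloorSemiring.tendsto_pow_div_factorial_atTop (c * t)).const_mul Mx
      have h1 : Tendsto (fun n : ℕ => Mx * (c * t) ^ n / n.factorial) atTop (nhds 0) := by
        simpa [mul_div_assoc] using h0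
      simpa using h1.const_add (a * Real.exp (c * t))
    exact ge_of_tendsto htail (Eventually.of_forall fun n => claim n t ⟨ht, le_rfl⟩)

lemma abs_int_le {q Bnd : ℝ → ℝ} {s : ℝ} (hs : 0 ≤ s)
    (hB : IntervalIntegrable Bnd volume 0 s)
    (hBpos : ∀ u ∈ Icc (0:ℝ) s, 0 ≤ Bnd u)
    (hq : ∀ u ∈ Icc (0:ℝ) s, |q u| ≤ Bnd u) :
    |∫ u in (0:ℝ)..s, q u| ≤ ∫ u in (0:ℝ)..s, Bnd u := by
  by_cases h : IntervalIntegrable q volume 0 s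
  · calc |∫ u in (0:ℝ)..s, q u| ≤ ∫ u in (0:ℝ)..s, |q u| :=
        intervalIntegral.abs_integral_le_integral_abs hs
      _ ≤ ∫ u in (0:ℝ)..s, Bnd u := intervalIntegral.integral_mono_on hs h.abs hB hq
  · rw [intervalIntegral.integral_undef h, abs_zero]
    exact intervalIntegral.integral_nonneg hs hBpos

lemma int_mono_upper {Bnd : ℝ → ℝ} {u s : ℝ} (h0u : 0 ≤ u) (hus : u ≤ s)
    (hB : IntervalIntegrable Bnd volume 0 s)
    (hBpos : ∀ v ∈ Icc (0:ℝ) s, 0 ≤ Bnd v) :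
    (∫ v in (0:ℝ)..u, Bnd v) ≤ ∫ v in (0:ℝ)..s, Bnd v := by
  have h1 : IntervalIntegrable Bnd volume 0 u := hB.mono_set
    (by rw [uIcc_of_le h0u, uIcc_of_le (h0u.trans hus)]; exact Icc_subset_Icc le_rfl hus)
  have h2 : IntervalIntegrable Bnd volume u s := hB.mono_set
    (by rw [uIcc_of_le hus, uIcc_of_le (h0u.trans hus)]; exact Icc_subset_Icc h0u le_rfl)
  rw [← intervalIntegral.integral_add_adjacent_intervals h1 h2]
  have h3 : 0 ≤ ∫ v in u..s, Bnd v :=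
    intervalIntegral.integral_nonneg hus fun v hv => hBpos v ⟨h0u.trans hv.1, hv.2⟩
  linarith

end AuxBound

open AuxBound

/-- **A priori bound for the unreflected auxiliary system:** if `W = (W₁,W₂)`
solves the system with data `(B, b, y)`, then for every `t ≥ 0`, with
`K = |b| + ‖y‖_t`, one has `‖W₁‖_t ≤ 2Ke^{6t}` and `‖W₂‖_t ≤ 4Ke^{6t}`. -/
theorem aux_system_apriori_bound
    (B : ℝ≥0∞) (b₁ b₂ : ℝ) (y₁ y₂ : ℝ → ℝ) (hy₁ : Cadlag y₁) (hy₂ : Cadlag y₂)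
    (W₁ W₂ : ℝ → ℝ) (hsol : IsAuxSolution B b₁ b₂ y₁ y₂ W₁ W₂)
    (t : ℝ) (ht : 0 ≤ t) :
    unif W₁ t ≤ 2 * (max |b₁| |b₂| + max (unif y₁ t) (unif y₂ t)) * Real.exp (6 * t) ∧
    unif W₂ t ≤ 4 * (max |b₁| |b₂| + max (unif y₁ t) (unif y₂ t)) * Real.exp (6 * t) := by
  classical
  obtain ⟨hW₁c, hW₂c, heq₁, heq₂, -⟩ := hsol
  set K := max |b₁| |b₂| + max (unif y₁ t) (unif y₂ t) with hKdef
  have hK : 0 ≤ K :=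
    add_nonneg ((abs_nonneg b₁).trans (le_max_left _ _))
      ((unif_nonneg y₁ t).trans (le_max_left _ _))
  obtain ⟨M₁, hM₁⟩ := cadlag_bounded hW₁c t
  obtain ⟨M₂, hM₂⟩ := cadlag_bounded hW₂c t
  obtain ⟨N₁, hN₁⟩ := cadlag_bounded hy₁ t
  obtain ⟨N₂, hN₂⟩ := cadlag_bounded hy₂ t
  set F₁ : ℝ → ℝ := fun r => unif W₁ (min r t) with hF₁def
  set F₂ : ℝ → ℝ := fun r => unif W₂ (min r t) with hF₂def
  have hF₁mono : Monotone F₁ := fun r r' h =>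
    unif_mono hM₁ (min_le_min h le_rfl) (min_le_right _ _)
  have hF₂mono : Monotone F₂ := fun r r' h =>
    unif_mono hM₂ (min_le_min h le_rfl) (min_le_right _ _)
  have hF₁nonneg : ∀ r, 0 ≤ F₁ r := fun r => unif_nonneg _ _
  have hF₂nonneg : ∀ r, 0 ≤ F₂ r := fun r => unif_nonneg _ _
  have hF₁eq : ∀ s, s ≤ t → F₁ s = unif W₁ s := fun s hs => by
    simp only [hF₁def, min_eq_left hs]
  have hF₂eq : ∀ s, s ≤ t → F₂ s = unif W₂ s := fun s hs => by
    simp only [hF₂def, min_eq_left hs]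
  have hInt₁ : ∀ s : ℝ, IntervalIntegrable F₁ volume 0 s := fun s =>
    hF₁mono.intervalIntegrable
  have hInt₂ : ∀ s : ℝ, IntervalIntegrable F₂ volume 0 s := fun s =>
    hF₂mono.intervalIntegrable
  -- pointwise bounds on integrands
  have hq₁ : ∀ u ∈ Icc (0:ℝ) t, |(-(phiR 0 W₁ u) + phiE B W₂ u)| ≤ 2 * F₁ u + 2 * F₂ u := by
    intro u hu
    have h1 : |phiR 0 W₁ u| ≤ 2 * unif W₁ u := abs_phiR_le le_rfl hM₁ hu.1 hu.2
    have h2 : |phiE B W₂ u| ≤ 2 * unif W₂ u := abs_phiE_le hM₂ hu.1 hu.2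
    have h3 : |(-(phiR 0 W₁ u) + phiE B W₂ u)| ≤ |(-(phiR 0 W₁ u))| + |phiE B W₂ u| :=
      abs_add_le _ _
    rw [abs_neg] at h3
    rw [hF₁eq u hu.2, hF₂eq u hu.2]
    linarith
  have hq₂ : ∀ u ∈ Icc (0:ℝ) t, |(-(phiE B W₂ u))| ≤ 2 * F₂ u := by
    intro u hu
    have h2 : |phiE B W₂ u| ≤ 2 * unif W₂ u := abs_phiE_le hM₂ hu.1 hu.2
    rw [abs_neg, hF₂eq u hu.2]
    linarith
  -- key inequality (i)
  have key₁ : ∀ s ∈ Icc (0:ℝ) t, F₁ s ≤ K + ∫ u in (0:ℝ)..s, (2 * F₁ u + 2 * F₂ u) := by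
    intro s hs
    have hBint : IntervalIntegrable (fun u => 2 * F₁ u + 2 * F₂ u) volume 0 s :=
      ((hInt₁ s).const_mul 2).add ((hInt₂ s).const_mul 2)
    have hBpos : ∀ v ∈ Icc (0:ℝ) s, 0 ≤ 2 * F₁ v + 2 * F₂ v := fun v _ => by
      have := hF₁nonneg v; have := hF₂nonneg v; linarith
    rw [hF₁eq s hs.2]
    apply unif_le hs.1
    intro u hu
    have hu0 : 0 ≤ u := hu.1
    have hut : u ∈ Icc (0:ℝ) t := ⟨hu.1, hu.2.trans hs.2⟩
    rw [heq₁ u hu0]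
    have hBintu : IntervalIntegrable (fun u => 2 * F₁ u + 2 * F₂ u) volume 0 u :=
      ((hInt₁ u).const_mul 2).add ((hInt₂ u).const_mul 2)
    have habs : |∫ v in (0:ℝ)..u, (-(phiR 0 W₁ v) + phiE B W₂ v)|
        ≤ ∫ v in (0:ℝ)..u, (2 * F₁ v + 2 * F₂ v) :=
      abs_int_le hu0 hBintu (fun v hv => hBpos v ⟨hv.1, hv.2.trans hu.2⟩)
        (fun v hv => hq₁ v ⟨hv.1, hv.2.trans hut.2⟩)
    have hext : (∫ v in (0:ℝ)..u, (2 * F₁ v + 2 * F₂ v))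
        ≤ ∫ v in (0:ℝ)..s, (2 * F₁ v + 2 * F₂ v) := int_mono_upper hu0 hu.2 hBint hBpos
    have hyb : |y₁ u| ≤ max (unif y₁ t) (unif y₂ t) :=
      (abs_le_unif hN₁ le_rfl hut).trans (le_max_left _ _)
    have hbb : |b₁| ≤ max |b₁| |b₂| := le_max_left _ _
    have htri1 : |b₁ + y₁ u + ∫ v in (0:ℝ)..u, (-(phiR 0 W₁ v) + phiE B W₂ v)|
        ≤ |b₁ + y₁ u| + |∫ v in (0:ℝ)..u, (-(phiR 0 W₁ v) + phiE B W₂ v)| := abs_add_le _ _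
    have htri2 : |b₁ + y₁ u| ≤ |b₁| + |y₁ u| := abs_add_le _ _
    rw [hKdef]
    linarith
  -- key inequality (ii)
  have key₂ : ∀ s ∈ Icc (0:ℝ) t, F₂ s ≤ K + F₁ s + ∫ u in (0:ℝ)..s, 2 * F₂ u := by
    intro s hs
    have hBint : IntervalIntegrable (fun u => 2 * F₂ u) volume 0 s := (hInt₂ s).const_mul 2
    have hBpos : ∀ v ∈ Icc (0:ℝ) s, 0 ≤ 2 * F₂ v := fun v _ => by
      have := hF₂nonneg v; linarith
    rw [hF₂eq s hs.2]
    apply unif_le hs.1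
    intro u hu
    have hu0 : 0 ≤ u := hu.1
    have hut : u ∈ Icc (0:ℝ) t := ⟨hu.1, hu.2.trans hs.2⟩
    rw [heq₂ u hu0]
    have hBintu : IntervalIntegrable (fun u => 2 * F₂ u) volume 0 u := (hInt₂ u).const_mul 2
    have habs : |∫ v in (0:ℝ)..u, -(phiE B W₂ v)| ≤ ∫ v in (0:ℝ)..u, 2 * F₂ v :=
      abs_int_le hu0 hBintu (fun v hv => hBpos v ⟨hv.1, hv.2.trans hu.2⟩)
        (fun v hv => hq₂ v ⟨hv.1, hv.2.trans hut.2⟩)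
    have hext : (∫ v in (0:ℝ)..u, 2 * F₂ v) ≤ ∫ v in (0:ℝ)..s, 2 * F₂ v :=
      int_mono_upper hu0 hu.2 hBint hBpos
    have hψ1 : psiR 0 W₁ u ≤ unif W₁ u := psiR_le_unif le_rfl hM₁ hu0 hut.2
    have hψ2 : unif W₁ u ≤ F₁ s := by rw [← hF₁eq u hut.2]; exact hF₁mono hu.2
    have hψ0 : 0 ≤ psiR 0 W₁ u := psiR_nonneg _ _ _
    have hyb : |y₂ u| ≤ max (unif y₁ t) (unif y₂ t) :=
      (abs_le_unif hN₂ le_rfl hut).trans (le_max_right _ _)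
    have hbb : |b₂| ≤ max |b₁| |b₂| := le_max_right _ _
    have htri1 : |b₂ + y₂ u + psiR 0 W₁ u + ∫ v in (0:ℝ)..u, -(phiE B W₂ v)|
        ≤ |b₂ + y₂ u + psiR 0 W₁ u| + |∫ v in (0:ℝ)..u, -(phiE B W₂ v)| := abs_add_le _ _
    have htri2 : |b₂ + y₂ u + psiR 0 W₁ u| ≤ |b₂ + y₂ u| + |psiR 0 W₁ u| := abs_add_le _ _
    have htri3 : |b₂ + y₂ u| ≤ |b₂| + |y₂ u| := abs_add_le _ _
    rw [abs_of_nonneg hψ0] at htri2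
    rw [hKdef]
    linarith
  -- Grönwall for H = F₁ + F₂
  set H : ℝ → ℝ := fun r => F₁ r + F₂ r with hHdef
  have hHmono : Monotone H := fun r r' h => add_le_add (hF₁mono h) (hF₂mono h)
  have hHint : ∀ s : ℝ, IntervalIntegrable H volume 0 s := fun s => hHmono.intervalIntegrable
  have hHIneq : ∀ s ∈ Icc (0:ℝ) t, H s ≤ 3 * K + ∫ u in (0:ℝ)..s, 6 * H u := by
    intro s hs
    have hA : 0 ≤ ∫ u in (0:ℝ)..s, F₁ u :=
      intervalIntegral.integral_nonneg hs.1 fun u _ => hF₁nonneg u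
    have e1 : (∫ u in (0:ℝ)..s, (2 * F₁ u + 2 * F₂ u))
        = 2 * (∫ u in (0:ℝ)..s, F₁ u) + 2 * ∫ u in (0:ℝ)..s, F₂ u := by
      rw [intervalIntegral.integral_add ((hInt₁ s).const_mul 2) ((hInt₂ s).const_mul 2),
        intervalIntegral.integral_const_mul, intervalIntegral.integral_const_mul]
    have e2 : (∫ u in (0:ℝ)..s, 2 * F₂ u) = 2 * ∫ u in (0:ℝ)..s, F₂ u :=
      intervalIntegral.integral_const_mul 2 F₂
    have e3 : (∫ u in (0:ℝ)..s, 6 * H u)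
        = 6 * (∫ u in (0:ℝ)..s, F₁ u) + 6 * ∫ u in (0:ℝ)..s, F₂ u := by
      have e3' : (∫ u in (0:ℝ)..s, 6 * H u) = ∫ u in (0:ℝ)..s, (6 * F₁ u + 6 * F₂ u) :=
        intervalIntegral.integral_congr fun u _ => by simp only [hHdef]; ring
      rw [e3', intervalIntegral.integral_add ((hInt₁ s).const_mul 6) ((hInt₂ s).const_mul 6),
        intervalIntegral.integral_const_mul, intervalIntegral.integral_const_mul]
    have k1 := key₁ s hs
    have k2 := key₂ s hs
    rw [e1] at k1
    rw [e2] at k2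
    rw [e3]
    simp only [hHdef]
    linarith
  have hgron : ∀ s ∈ Icc (0:ℝ) t, H s ≤ 3 * K * Real.exp (6 * s) := by
    intro s hs
    exact gronwall hHmono (by linarith : (0:ℝ) ≤ 3 * K) (by norm_num : (0:ℝ) ≤ 6) hs.1
      (fun u hu => hHIneq u ⟨hu.1, hu.2.trans hs.2⟩)
  have hi2H : IntervalIntegrable (fun u => 2 * H u) volume 0 t := (hHint t).const_mul 2
  have hfin : (∫ u in (0:ℝ)..t, 2 * H u) ≤ K * (Real.exp (6 * t) - 1) := by
    have hle : ∀ u ∈ Icc (0:ℝ) t, 2 * H u ≤ K * (6 * Real.exp (6 * u)) := by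
      intro u hu
      have h1 := hgron u hu
      linarith
    have hi2 : IntervalIntegrable (fun u => K * (6 * Real.exp (6 * u))) volume 0 t :=
      (continuous_const.mul (continuous_const.mul
        (Real.continuous_exp.comp (continuous_const.mul continuous_id)))).intervalIntegrable 0 t
    have h3 := intervalIntegral.integral_mono_on ht hi2H hi2 hle
    have h4 : (∫ u in (0:ℝ)..t, K * (6 * Real.exp (6 * u))) = K * (Real.exp (6 * t) - 1) := by
      rw [intervalIntegral.integral_const_mul, int_c_exp (by norm_num : (6:ℝ) ≠ 0) t]
    rw [h4] at h3
    exact h3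
  have e2H : (∫ u in (0:ℝ)..t, (2 * F₁ u + 2 * F₂ u)) = ∫ u in (0:ℝ)..t, 2 * H u :=
    intervalIntegral.integral_congr fun u _ => by simp only [hHdef]; ring
  have eB : (∫ u in (0:ℝ)..t, 2 * F₂ u) ≤ ∫ u in (0:ℝ)..t, 2 * H u := by
    apply intervalIntegral.integral_mono_on ht ((hInt₂ t).const_mul 2) hi2H
    intro u _
    have := hF₁nonneg u
    simp only [hHdef]
    linarith
  have k1 := key₁ t ⟨ht, le_rfl⟩
  have k2 := key₂ t ⟨ht, le_rfl⟩
  rw [e2H] at k1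
  have hF₁t : F₁ t = unif W₁ t := hF₁eq t le_rfl
  have hF₂t : F₂ t = unif W₂ t := hF₂eq t le_rfl
  have hKE : 0 ≤ K * Real.exp (6 * t) := mul_nonneg hK (Real.exp_pos _).le
  have hW1 : F₁ t ≤ K * Real.exp (6 * t) := by linarith
  constructor
  · rw [← hF₁t]
    linarith
  · rw [← hF₂t]
    linarith
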